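/- With the above notation for the case 𝔤 = 𝔰𝔬(2r+1,2r+1), let m = (m_1,…,m_r) be a dominant tuple of integers. If m_r ≥ 1 then C(m) = 1/(2r+1), and if m_r = 0 then C(m) = 0. In particular C(m) = 0 if and only if m_r = 0. -/

import Mathlib

set_option maxHeartbeats 1000000


open Finset

/-- A tuple of integers is dominant if its entries are weakly decreasing and nonnegative. -/
def Dominant {r : ℕ} (m : Fin r → ℤ) : Prop :=
  (∀ j k : Fin r, j ≤ k → m k ≤ m j) ∧ ∀ j : Fin r, 0 ≤ m j

instance {r : ℕ} (m : Fin r → ℤ) : Decidable (Dominant m) := by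
  unfold Dominant; infer_instance

/-- The genus `p = (e+1) + (r-1)d + b/2`. -/
noncomputable def genusP (r : ℕ) (b d e : ℝ) : ℝ := (e + 1) + ((r : ℝ) - 1) * d + b / 2

/-- `n = r(p + b/2)`. -/
noncomputable def dimN (r : ℕ) (b d e : ℝ) : ℝ := r * (genusP r b d e + b / 2)

/-- `ρ_k = (r-k)d/2 + e/2 + b/4` (1-indexed `k`). -/
noncomputable def rho (r : ℕ) (b d e : ℝ) (k : Fin r) : ℝ :=
  ((r : ℝ) - ((k : ℕ) + 1)) * d / 2 + e / 2 + b / 4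

/-- The coefficient `A(m,k)`. -/
noncomputable def Acoef (r : ℕ) (b d e : ℝ) (m : Fin r → ℤ) (k : Fin r) : ℝ :=
  (genusP r b d e / (2 * dimN r b d e)) *
    ((2 * ((m k : ℝ) + rho r b d e k) + b / 2 + 1) *
        (2 * ((m k : ℝ) + rho r b d e k) + b / 2 + e)) /
      ((2 * ((m k : ℝ) + rho r b d e k)) * (2 * ((m k : ℝ) + rho r b d e k) + 1)) *
    ∏ j ∈ univ.erase k,
      ((((m k : ℝ) + rho r b d e k) - ((m j : ℝ) + rho r b d e j) + d / 2) *
          (((m k : ℝ) + rho r b d e k) + ((m j : ℝ) + rho r b d e j) + d / 2)) /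
        ((((m k : ℝ) + rho r b d e k) - ((m j : ℝ) + rho r b d e j)) *
          (((m k : ℝ) + rho r b d e k) + ((m j : ℝ) + rho r b d e j)))

/-- The coefficient `B(m,k)`. -/
noncomputable def Bcoef (r : ℕ) (b d e : ℝ) (m : Fin r → ℤ) (k : Fin r) : ℝ :=
  (genusP r b d e / (2 * dimN r b d e)) *
    ((2 * ((m k : ℝ) + rho r b d e k) - b / 2 - 1) *
        (2 * ((m k : ℝ) + rho r b d e k) - b / 2 - e)) /
      ((2 * ((m k : ℝ) + rho r b d e k)) * (2 * ((m k : ℝ) + rho r b d e k) - 1)) *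
    ∏ j ∈ univ.erase k,
      ((((m k : ℝ) + rho r b d e k) + ((m j : ℝ) + rho r b d e j) - d / 2) *
          (((m k : ℝ) + rho r b d e k) - ((m j : ℝ) + rho r b d e j) - d / 2)) /
        ((((m k : ℝ) + rho r b d e k) + ((m j : ℝ) + rho r b d e j)) *
          (((m k : ℝ) + rho r b d e k) - ((m j : ℝ) + rho r b d e j)))

/-- The coefficient `C(m)`. -/
noncomputable def Ccoef (r : ℕ) (b d e : ℝ) (m : Fin r → ℤ) : ℝ :=
  1 - (∑ k ∈ univ.filter (fun k : Fin r =>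
        Dominant (fun j => m j + if j = k then 1 else 0)), Acoef r b d e m k)
    - (∑ k ∈ univ.filter (fun k : Fin r =>
        Dominant (fun j => m j - if j = k then 1 else 0)), Bcoef r b d e m k)

lemma prod_ite_one_erase {ι : Type*} [Fintype ι] [DecidableEq ι] (i : ι) (f : ι → ℝ) :
    ∏ j, (if j = i then 1 else f j) = ∏ j ∈ univ.erase i, f j := by
  rw [← Finset.mul_prod_erase univ _ (mem_univ i), if_pos rfl, one_mul]
  exact Finset.prod_congr rfl fun j hj => if_neg (mem_erase.mp hj).1

lemma rho_so (r : ℕ) (k : Fin r) : rho r 2 2 0 k = (r : ℝ) - (k : ℕ) - 1/2 := by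
  unfold rho; ring


lemma Acoef_eq (r : ℕ) (m : Fin r → ℤ) (k : Fin r)
    (X : Fin r → ℝ) (hX : ∀ j, X j = (m j : ℝ) + rho r 2 2 0 j)
    (hr : 0 < r)
    (h0 : X k ≠ 0) (h1 : 2 * X k + 1 ≠ 0)
    (hd : ∀ j ∈ univ.erase k, (X k - X j) ≠ 0 ∧ (X k + X j) ≠ 0) :
    Acoef r 2 2 0 m k =
      ((X k + 1) * ∏ j ∈ univ.erase k, ((X k - X j + 1) * (X k + X j + 1))) /
        ((2 * (r : ℝ) + 1) * X k * ∏ j ∈ univ.erase k, ((X k - X j) * (X k + X j))) := by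
  have hPd : (∏ j ∈ univ.erase k, ((X k - X j) * (X k + X j))) ≠ 0 := by
    rw [Finset.prod_ne_zero_iff]
    exact fun j hj => mul_ne_zero (hd j hj).1 (hd j hj).2
  have h22 : (2:ℝ)/2 = 1 := by norm_num
  have hrR : (0:ℝ) < r := by exact_mod_cast hr
  have hr1 : (2 * (r:ℝ) + 1) ≠ 0 := by positivity
  have hx2 : (2:ℝ) * X k ≠ 0 := by simpa using h0
  have comb : ∀ a b c d p q : ℝ, (a / b * c / d) * (p / q) = (a*c*p)/(b*d*q) := by
    intro a b c d p q
    simp only [div_eq_mul_inv, mul_inv]; ring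
  simp only [Acoef, genusP, dimN, ← hX, h22]
  rw [Finset.prod_div_distrib, comb]
  rw [div_eq_div_iff (by
      refine mul_ne_zero (mul_ne_zero ?_ (mul_ne_zero hx2 h1)) hPd
      nlinarith)
    (mul_ne_zero (mul_ne_zero (by nlinarith) h0) hPd)]
  ring

lemma Bcoef_eq (r : ℕ) (m : Fin r → ℤ) (k : Fin r)
    (X : Fin r → ℝ) (hX : ∀ j, X j = (m j : ℝ) + rho r 2 2 0 j)
    (hr : 0 < r)
    (h0 : X k ≠ 0) (h1 : 2 * X k - 1 ≠ 0)
    (hd : ∀ j ∈ univ.erase k, (X k - X j) ≠ 0 ∧ (X k + X j) ≠ 0) :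
    Bcoef r 2 2 0 m k =
      ((X k - 1) * ∏ j ∈ univ.erase k, ((X k + X j - 1) * (X k - X j - 1))) /
        ((2 * (r : ℝ) + 1) * X k * ∏ j ∈ univ.erase k, ((X k + X j) * (X k - X j))) := by
  have hPd : (∏ j ∈ univ.erase k, ((X k + X j) * (X k - X j))) ≠ 0 := by
    rw [Finset.prod_ne_zero_iff]
    exact fun j hj => mul_ne_zero (hd j hj).2 (hd j hj).1
  have h22 : (2:ℝ)/2 = 1 := by norm_num
  have hrR : (0:ℝ) < r := by exact_mod_cast hr
  have hr1 : (2 * (r:ℝ) + 1) ≠ 0 := by positivity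
  have hx2 : (2:ℝ) * X k ≠ 0 := by simpa using h0
  have comb : ∀ a b c d p q : ℝ, (a / b * c / d) * (p / q) = (a*c*p)/(b*d*q) := by
    intro a b c d p q
    simp only [div_eq_mul_inv, mul_inv]; ring
  simp only [Bcoef, genusP, dimN, ← hX, h22]
  rw [Finset.prod_div_distrib, comb]
  rw [div_eq_div_iff (by
      refine mul_ne_zero (mul_ne_zero ?_ (mul_ne_zero hx2 h1)) hPd
      nlinarith)
    (mul_ne_zero (mul_ne_zero (by nlinarith) h0) hPd)]
  ring

lemma Acoef_eq_zero (r : ℕ) (m : Fin r → ℤ) (k : Fin r) (hm : Dominant m)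
    (hnd : ¬ Dominant (fun j => m j + if j = k then 1 else 0)) :
    Acoef r 2 2 0 m k = 0 := by
  have hB : ∀ j : Fin r, 0 ≤ m j + if j = k then 1 else 0 := by
    intro j; have := hm.2 j; split <;> omega
  have hA : ¬ (∀ j j' : Fin r, j ≤ j' →
      (m j' + if j' = k then 1 else 0) ≤ (m j + if j = k then 1 else 0)) :=
    fun h => hnd ⟨h, hB⟩
  push_neg at hA
  obtain ⟨j, j', hle, hgt⟩ := hA
  have hj'k : j' = k := by
    by_contra h
    rw [if_neg h] at hgt
    have h2 : m j' ≤ m j := hm.1 j j' hle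
    split at hgt <;> omega
  rw [hj'k] at hle hgt
  have hjk : j ≠ k := by rintro rfl; simp at hgt
  rw [if_pos rfl, if_neg hjk] at hgt
  have hdom : m k ≤ m j := hm.1 j k hle
  have hjlt : (j:ℕ) < (k:ℕ) :=
    lt_of_le_of_ne hle (by simpa [Fin.val_inj] using hjk)
  have hk1 : 1 ≤ (k:ℕ) := by omega
  have hkr : (k:ℕ) < r := k.isLt
  set p : Fin r := ⟨(k:ℕ) - 1, by omega⟩ with hp
  have hpk : p ≠ k := by
    simp only [hp, Ne, Fin.ext_iff]; omega
  have hmp : m p = m k := by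
    have h1 : m p ≤ m j := hm.1 j p (by simp only [hp, Fin.le_def]; omega)
    have h2 : m k ≤ m p := hm.1 p k (by simp only [hp, Fin.le_def]; omega)
    omega
  unfold Acoef
  rw [Finset.prod_eq_zero (Finset.mem_erase.mpr ⟨hpk, Finset.mem_univ p⟩), mul_zero]
  have hz : ((m k : ℝ) + rho r 2 2 0 k) - ((m p : ℝ) + rho r 2 2 0 p) + 2/2 = 0 := by
    rw [rho_so, rho_so, hmp]
    have hc : (((p:ℕ)) : ℝ) = ((k:ℕ):ℝ) - 1 := by
      rw [hp]; push_cast [Nat.cast_sub hk1]; ring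
    rw [hc]; ring
  rw [hz, zero_mul, zero_div]

lemma Bcoef_eq_zero (r : ℕ) (m : Fin r → ℤ) (k : Fin r) (hm : Dominant m)
    (hnd : ¬ Dominant (fun j => m j - if j = k then 1 else 0))
    (hcase : (k:ℕ) + 1 < r ∨ 1 ≤ m k) :
    Bcoef r 2 2 0 m k = 0 := by
  have key : ∃ p : Fin r, ((p:ℕ) = (k:ℕ) + 1 ∧ m p = m k) := by
    by_cases hn : ∀ j : Fin r, 0 ≤ m j - if j = k then 1 else 0
    · have hA : ¬ (∀ j j' : Fin r, j ≤ j' →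
          (m j' - if j' = k then 1 else 0) ≤ (m j - if j = k then 1 else 0)) :=
        fun h => hnd ⟨h, hn⟩
      push_neg at hA
      obtain ⟨j, j', hle, hgt⟩ := hA
      have hjk : j = k := by
        by_contra h
        rw [if_neg h] at hgt
        have h2 : m j' ≤ m j := hm.1 j j' hle
        split at hgt <;> omega
      rw [hjk] at hle hgt
      have hj'k : j' ≠ k := by rintro rfl; simp at hgt
      rw [if_pos rfl, if_neg hj'k] at hgt
      have hdom : m j' ≤ m k := hm.1 k j' hle
      have hlt : (k:ℕ) < (j':ℕ) :=
        lt_of_le_of_ne hle (by simpa [Fin.val_inj] using hj'k.symm)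
      refine ⟨⟨(k:ℕ) + 1, by omega⟩, rfl, ?_⟩
      have h1 : m (⟨(k:ℕ) + 1, by omega⟩ : Fin r) ≤ m k :=
        hm.1 k _ (by simp only [Fin.le_def]; omega)
      have h2 : m j' ≤ m (⟨(k:ℕ) + 1, by omega⟩ : Fin r) :=
        hm.1 _ j' (by simp only [Fin.le_def]; omega)
      omega
    · push_neg at hn
      obtain ⟨j, hj⟩ := hn
      have hjk : j = k := by
        by_contra h; rw [if_neg h] at hj; have := hm.2 j; omega
      rw [hjk, if_pos rfl] at hj
      have hmk : m k = 0 := by have := hm.2 k; omega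
      have hklt : (k:ℕ) + 1 < r := by
        rcases hcase with h | h
        · exact h
        · omega
      refine ⟨⟨(k:ℕ) + 1, hklt⟩, rfl, ?_⟩
      have h1 : m (⟨(k:ℕ) + 1, hklt⟩ : Fin r) ≤ m k :=
        hm.1 k _ (by simp only [Fin.le_def]; omega)
      have h2 := hm.2 (⟨(k:ℕ) + 1, hklt⟩ : Fin r)
      omega
  obtain ⟨p, hpval, hmp⟩ := key
  have hpk : p ≠ k := by
    simp only [Ne, Fin.ext_iff]; omega
  unfold Bcoef
  rw [Finset.prod_eq_zero (Finset.mem_erase.mpr ⟨hpk, Finset.mem_univ p⟩), mul_zero]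
  have hz : ((m k : ℝ) + rho r 2 2 0 k) - ((m p : ℝ) + rho r 2 2 0 p) - 2/2 = 0 := by
    rw [rho_so, rho_so, hmp]
    have hc : (((p:ℕ)) : ℝ) = ((k:ℕ):ℝ) + 1 := by rw [hpval]; push_cast; ring
    rw [hc]; ring
  rw [hz, mul_zero, zero_div]

open Polynomial Lagrange in
lemma key_residue_sum {ι : Type*} [Fintype ι] [DecidableEq ι] (y w : ι → ℝ)
    (hy : Function.Injective y) :
    ∑ i, (∏ j, (y i - w j)) / (∏ j ∈ univ.erase i, (y i - y j)) =
      (∑ j, y j) - ∑ j, w j := by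
  cases isEmpty_or_nonempty ι with
  | inl h => simp
  | inr h =>
  classical
  set n := Fintype.card ι with hn
  have hn1 : 1 ≤ n := Fintype.card_pos
  set P : ℝ[X] := nodal univ w with hP
  set Q : ℝ[X] := nodal univ y with hQ
  have hinj : Set.InjOn y (univ : Finset ι) := fun a _ b _ hab => hy hab
  have hdegP : P.degree = (n : ℕ) := by
    rw [hP, degree_nodal, card_univ]
  have hdegQ : Q.degree = (n : ℕ) := by
    rw [hQ, degree_nodal, card_univ]
  have hS : (P - Q).degree < (#(univ : Finset ι) : ℕ) := by
    rw [card_univ, ← hdegP]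
    exact degree_sub_lt (hdegP.trans hdegQ.symm) nodal_ne_zero
      (nodal_monic.leadingCoeff.trans nodal_monic.leadingCoeff.symm)
  have hinterp := eq_interpolate (f := P - Q) hinj hS
  have hcoeff := congrArg (fun p : ℝ[X] => p.coeff (n - 1)) hinterp
  simp only [interpolate_apply] at hcoeff
  rw [finset_sum_coeff] at hcoeff
  have hbasis : ∀ i : ι, (C ((P - Q).eval (y i)) * Lagrange.basis univ y i).coeff (n - 1)
      = (∏ j, (y i - w j)) * ∏ j ∈ univ.erase i, (y i - y j)⁻¹ := by
    intro i
    rw [coeff_C_mul]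
    have hb : Lagrange.basis univ y i
        = C (nodalWeight univ y i) * nodal (univ.erase i) y := by
      rw [basis_eq_prod_sub_inv_mul_nodal_div (mem_univ i),
        nodal_erase_eq_nodal_div (mem_univ i)]
    have hdeg : (nodal (univ.erase i) y).natDegree = n - 1 := by
      rw [natDegree_nodal, card_erase_of_mem (mem_univ i), card_univ]
    have hcoeffb : (nodal (univ.erase i) y).coeff (n - 1) = 1 := by
      rw [← hdeg]; exact nodal_monic.coeff_natDegree
    rw [hb, coeff_C_mul, hcoeffb, mul_one]
    have heval : (P - Q).eval (y i) = ∏ j, (y i - w j) := by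
      rw [eval_sub, hQ, eval_nodal_at_node (mem_univ i), sub_zero, hP, eval_nodal]
    rw [heval, nodalWeight, mul_comm]
  rw [Finset.sum_congr rfl (fun i _ => hbasis i)] at hcoeff
  have hrhs : (P - Q).coeff (n - 1) = (∑ j, y j) - ∑ j, w j := by
    have hnP : P.natDegree = n := by rw [hP, natDegree_nodal, card_univ]
    have hnQ : Q.natDegree = n := by rw [hQ, natDegree_nodal, card_univ]
    have h1 : P.coeff (n - 1) = -∑ j, w j := by
      have := prod_X_sub_C_nextCoeff (s := (univ : Finset ι)) w
      rwa [← nodal_eq, nextCoeff_of_natDegree_pos (by rw [hnP]; omega), hnP] at this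
    have h2 : Q.coeff (n - 1) = -∑ j, y j := by
      have := prod_X_sub_C_nextCoeff (s := (univ : Finset ι)) y
      rwa [← nodal_eq, nextCoeff_of_natDegree_pos (by rw [hnQ]; omega), hnQ] at this
    rw [coeff_sub, h1, h2]; ring
  rw [hrhs] at hcoeff
  rw [hcoeff]
  refine Finset.sum_congr rfl fun i _ => ?_
  rw [div_eq_mul_inv, prod_inv_distrib]


lemma case1_sum (r : ℕ) (hr : 1 < r) (m : Fin r → ℤ) (hm : Dominant m)
    (hc : 1 ≤ m ⟨r - 1, by have := hm; omega⟩) :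
    (∑ k, Acoef r 2 2 0 m k) + (∑ k, Bcoef r 2 2 0 m k)
      = 2 * (r:ℝ) / (2 * (r:ℝ) + 1) := by
  classical
  have hr0 : 0 < r := by omega
  obtain ⟨L, hLval⟩ : ∃ L : Fin r, (L : ℕ) = r - 1 := ⟨⟨r - 1, by have := hm; omega⟩, rfl⟩
  have hcL : 1 ≤ m L := by
    have : (⟨r - 1, by have := hm; omega⟩ : Fin r) = L := Fin.ext (by simp only [Fin.val_mk]; omega)
    rwa [this] at hc
  obtain ⟨X, hXj⟩ : ∃ X : Fin r → ℝ, ∀ j, X j = (m j : ℝ) + rho r 2 2 0 j :=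
    ⟨_, fun j => rfl⟩
  have hXval : ∀ k : Fin r, X k = (m k : ℝ) + ((r:ℝ) - (k:ℕ) - 1/2) := by
    intro k; rw [hXj, rho_so]
  have hmono : ∀ j k : Fin r, j < k → X k + 1 ≤ X j := by
    intro j k h
    have h1 : m k ≤ m j := hm.1 j k h.le
    have h2 : (j:ℕ) < (k:ℕ) := h
    have h1' : (m k : ℝ) ≤ (m j : ℝ) := by exact_mod_cast h1
    have h2' : ((j:ℕ):ℝ) + 1 ≤ ((k:ℕ):ℝ) := by exact_mod_cast h2
    rw [hXval, hXval]; linarith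
  have hge : ∀ k : Fin r, (3:ℝ)/2 ≤ X k := by
    intro k
    have hXL : (3:ℝ)/2 ≤ X L := by
      have hc' : (1:ℝ) ≤ (m L : ℝ) := by exact_mod_cast hcL
      rw [hXval]
      have hcast : ((L:ℕ):ℝ) = (r:ℝ) - 1 := by
        rw [hLval]; push_cast [Nat.cast_sub (by omega : 1 ≤ r)]; ring
      rw [hcast]; linarith
    rcases lt_or_eq_of_le (show k ≤ L by
      simp only [Fin.le_def, hLval]; omega) with h | h
    · have := hmono k L h; linarith
    · rw [h]; exact hXL
  have hXinj : ∀ j k : Fin r, X j = X k → j = k := by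
    intro j k h
    rcases lt_trichotomy j k with hlt | heq | hlt
    · have := hmono j k hlt; exfalso; linarith
    · exact heq
    · have := hmono k j hlt; exfalso; linarith
  -- node/root functions
  set y : Fin 2 ⊕ (Fin r ⊕ Fin r) → ℝ :=
    Sum.elim ![-1/2, 0] (Sum.elim X (fun k => -X k)) with hy
  set w : Fin 2 ⊕ (Fin r ⊕ Fin r) → ℝ :=
    Sum.elim ![0, -1] (Sum.elim (fun k => X k - 1) (fun k => -X k - 1)) with hw
  have hyinj : Function.Injective y := by
    rintro (a | j | j) (b | l | l) h <;>
      simp only [hy, Sum.elim_inl, Sum.elim_inr] at h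
    · fin_cases a <;> fin_cases b <;> first | rfl | norm_num at h
    · exfalso; fin_cases a <;> norm_num at h <;> linarith [hge l]
    · exfalso; fin_cases a <;> norm_num at h <;> linarith [hge l]
    · exfalso; fin_cases b <;> norm_num at h <;> linarith [hge j]
    · rw [hXinj j l h]
    · exfalso; linarith [hge j, hge l]
    · exfalso; fin_cases b <;> norm_num at h <;> linarith [hge j]
    · exfalso; linarith [hge j, hge l]
    · have hjl : X j = X l := by linarith
      rw [hXinj j l hjl]
  have hkey := key_residue_sum y w hyinj
  -- basic nonvanishing facts
  have hXk0 : ∀ k : Fin r, X k ≠ 0 := fun k => ne_of_gt (by linarith [hge k])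
  have hpairne : ∀ k j : Fin r, j ≠ k → X k - X j ≠ 0 := fun k j hj =>
    sub_ne_zero.mpr fun h => hj (hXinj j k h.symm)
  have hsumne : ∀ k j : Fin r, X k + X j ≠ 0 := fun k j =>
    ne_of_gt (by linarith [hge k, hge j])
  have hDne : ∀ i : Fin 2 ⊕ (Fin r ⊕ Fin r), (∏ j ∈ univ.erase i, (y i - y j)) ≠ 0 := by
    intro i
    rw [Finset.prod_ne_zero_iff]
    intro j hj
    exact sub_ne_zero.mpr fun hh => (Finset.mem_erase.mp hj).1 (hyinj hh).symm
  -- numerator evaluation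
  have hnum : ∀ c : ℝ, (∏ j, (c - w j)) =
      (c * (c + 1)) * ((∏ j, (c - X j + 1)) * ∏ j, (c + X j + 1)) := by
    intro c
    rw [Fintype.prod_sum_type, Fintype.prod_sum_type, Fin.prod_univ_two]
    simp only [hw, Sum.elim_inl, Sum.elim_inr, Matrix.cons_val_zero, Matrix.cons_val_one,
      Matrix.head_cons]
    have e1 : ∏ j : Fin r, (c - (X j - 1)) = ∏ j : Fin r, (c - X j + 1) :=
      Finset.prod_congr rfl fun j _ => by ring
    have e2 : ∏ j : Fin r, (c - (-X j - 1)) = ∏ j : Fin r, (c + X j + 1) :=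
      Finset.prod_congr rfl fun j _ => by ring
    rw [e1, e2]; ring
  -- denominators
  have hden : ∀ (i : Fin 2 ⊕ (Fin r ⊕ Fin r)) (c : ℝ),
      (∏ j ∈ univ.erase i, (c - y j)) = ∏ j, (if j = i then 1 else (c - y j)) :=
    fun i c => (prod_ite_one_erase i _).symm
  -- slot: the node -1/2
  have hT0 : (∏ j, (y (Sum.inl 0) - w j)) /
      (∏ j ∈ univ.erase (Sum.inl 0 : Fin 2 ⊕ (Fin r ⊕ Fin r)), (y (Sum.inl 0) - y j))
      = 1/2 := by
    have hy0 : y (Sum.inl 0) = -(1/2) := by norm_num [hy]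
    rw [hy0, hnum, hden]
    rw [Fintype.prod_sum_type, Fintype.prod_sum_type, Fin.prod_univ_two]
    simp only [hy, Sum.elim_inl, Sum.elim_inr, Matrix.cons_val_zero, Matrix.cons_val_one,
      Matrix.head_cons, reduceCtorEq, ite_false, Sum.inl.injEq, Sum.inr.injEq]
    rw [if_pos trivial, if_neg (by decide : ¬(1:Fin 2) = 0)]
    rw [← Finset.prod_mul_distrib, ← Finset.prod_mul_distrib]
    have e3 : ∏ j : Fin r, ((-(1/2) - X j + 1) * (-(1/2) + X j + 1))
        = ∏ j : Fin r, ((-(1/2) - X j) * (-(1/2) - -X j)) :=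
      Finset.prod_congr rfl fun j _ => by ring
    rw [e3]
    have hPP : (∏ j : Fin r, ((-(1/2) - X j) * (-(1/2) - -X j))) ≠ 0 := by
      rw [Finset.prod_ne_zero_iff]
      intro j _
      have := hge j
      exact mul_ne_zero (by intro h; nlinarith) (by intro h; nlinarith)
    rw [div_eq_iff (by
      refine mul_ne_zero (by norm_num) hPP)]
    ring

  -- slot: the node 0 (numerator vanishes)
  have hT1 : (∏ j, (y (Sum.inl 1) - w j)) /
      (∏ j ∈ univ.erase (Sum.inl 1 : Fin 2 ⊕ (Fin r ⊕ Fin r)), (y (Sum.inl 1) - y j))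
      = 0 := by
    have hz : (∏ j, (y (Sum.inl 1) - w j)) = 0 :=
      Finset.prod_eq_zero (Finset.mem_univ (Sum.inl 0)) (by norm_num [hy, hw])
    rw [hz, zero_div]
  have hr1 : (2 * (r:ℝ) + 1) ≠ 0 := by positivity
  have hE1 : ∀ k : Fin r, (∏ j ∈ univ.erase k, (X k - X j)) ≠ 0 := fun k =>
    Finset.prod_ne_zero_iff.mpr fun j hj => hpairne k j (Finset.mem_erase.mp hj).1
  have hE2 : ∀ k : Fin r, (∏ j ∈ univ.erase k, (X k + X j)) ≠ 0 := fun k =>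
    Finset.prod_ne_zero_iff.mpr fun j _ => hsumne k j
  -- slots for A
  have hTA : ∀ k : Fin r, (∏ j, (y (Sum.inr (Sum.inl k)) - w j)) /
      (∏ j ∈ univ.erase (Sum.inr (Sum.inl k) : Fin 2 ⊕ (Fin r ⊕ Fin r)),
        (y (Sum.inr (Sum.inl k)) - y j))
      = (2 * (r:ℝ) + 1) * Acoef r 2 2 0 m k := by
    intro k
    have hyk : y (Sum.inr (Sum.inl k)) = X k := rfl
    rw [hyk, hnum, hden]
    rw [Fintype.prod_sum_type, Fintype.prod_sum_type, Fin.prod_univ_two]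
    simp only [hy, Sum.elim_inl, Sum.elim_inr, Matrix.cons_val_zero, Matrix.cons_val_one,
      Matrix.head_cons, reduceCtorEq, ite_false, Sum.inl.injEq, Sum.inr.injEq]
    rw [prod_ite_one_erase k (fun j => X k - X j)]
    have e2 : ∏ j : Fin r, (X k - -X j) = ∏ j : Fin r, (X k + X j) :=
      Finset.prod_congr rfl fun j _ => by ring
    rw [e2]
    rw [← Finset.mul_prod_erase univ (fun j => X k - X j + 1) (Finset.mem_univ k),
        ← Finset.mul_prod_erase univ (fun j => X k + X j + 1) (Finset.mem_univ k),
        ← Finset.mul_prod_erase univ (fun j => X k + X j) (Finset.mem_univ k)]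
    rw [Acoef_eq r m k X hXj hr0 (hXk0 k) (by linarith [hge k])
      (fun j hj => ⟨hpairne k j (Finset.mem_erase.mp hj).1, hsumne k j⟩)]
    rw [Finset.prod_mul_distrib, Finset.prod_mul_distrib]
    rw [← mul_div_assoc]
    rw [div_eq_div_iff
      (by repeat' apply mul_ne_zero
          all_goals first
            | exact hE1 k | exact hE2 k | exact hXk0 k
            | (intro hcon; nlinarith [hge k]))
      (by repeat' apply mul_ne_zero
          all_goals first
            | exact hE1 k | exact hE2 k | exact hXk0 k | exact hr1
            | (intro hcon; nlinarith [hge k]))]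
    ring
  -- product of negatives
  have prod_neg' : ∀ (t : Finset (Fin r)) (f : Fin r → ℝ),
      ∏ j ∈ t, (-f j) = (-1)^t.card * ∏ j ∈ t, f j := by
    intro t f
    rw [← Finset.prod_const, ← Finset.prod_mul_distrib]
    exact Finset.prod_congr rfl fun j _ => by ring
  -- slots for B
  have hTB : ∀ k : Fin r, (∏ j, (y (Sum.inr (Sum.inr k)) - w j)) /
      (∏ j ∈ univ.erase (Sum.inr (Sum.inr k) : Fin 2 ⊕ (Fin r ⊕ Fin r)),
        (y (Sum.inr (Sum.inr k)) - y j))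
      = (2 * (r:ℝ) + 1) * Bcoef r 2 2 0 m k := by
    intro k
    have hyk : y (Sum.inr (Sum.inr k)) = -X k := rfl
    rw [hyk, hnum, hden]
    rw [Fintype.prod_sum_type, Fintype.prod_sum_type, Fin.prod_univ_two]
    simp only [hy, Sum.elim_inl, Sum.elim_inr, Matrix.cons_val_zero, Matrix.cons_val_one,
      Matrix.head_cons, reduceCtorEq, ite_false, Sum.inl.injEq, Sum.inr.injEq]
    rw [prod_ite_one_erase k (fun j => -X k - -X j)]
    rw [← Finset.mul_prod_erase univ (fun j => -X k - X j + 1) (Finset.mem_univ k),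
        ← Finset.mul_prod_erase univ (fun j => -X k + X j + 1) (Finset.mem_univ k),
        ← Finset.mul_prod_erase univ (fun j => -X k - X j) (Finset.mem_univ k)]
    have c1 : ∏ j ∈ univ.erase k, (-X k - X j + 1)
        = (-1)^(univ.erase k).card * ∏ j ∈ univ.erase k, (X k + X j - 1) := by
      rw [← prod_neg']
      exact Finset.prod_congr rfl fun j _ => by ring
    have c2 : ∏ j ∈ univ.erase k, (-X k + X j + 1)
        = (-1)^(univ.erase k).card * ∏ j ∈ univ.erase k, (X k - X j - 1) := by
      rw [← prod_neg']
      exact Finset.prod_congr rfl fun j _ => by ring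
    have c3 : ∏ j ∈ univ.erase k, (-X k - X j)
        = (-1)^(univ.erase k).card * ∏ j ∈ univ.erase k, (X k + X j) := by
      rw [← prod_neg']
      exact Finset.prod_congr rfl fun j _ => by ring
    have c4 : ∏ j ∈ univ.erase k, (-X k - -X j)
        = (-1)^(univ.erase k).card * ∏ j ∈ univ.erase k, (X k - X j) := by
      rw [← prod_neg']
      exact Finset.prod_congr rfl fun j _ => by ring
    rw [c1, c2, c3, c4]
    rw [Bcoef_eq r m k X hXj hr0 (hXk0 k) (by linarith [hge k])
      (fun j hj => ⟨hpairne k j (Finset.mem_erase.mp hj).1, hsumne k j⟩)]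
    rw [Finset.prod_mul_distrib, Finset.prod_mul_distrib]
    rw [← mul_div_assoc]
    have hu : ((-1:ℝ))^(univ.erase k).card ≠ 0 := pow_ne_zero _ (by norm_num)
    rw [div_eq_div_iff
      (by repeat' apply mul_ne_zero
          all_goals first
            | exact hE1 k | exact hE2 k | exact hXk0 k | exact hu
            | (intro hcon; nlinarith [hge k]))
      (by repeat' apply mul_ne_zero
          all_goals first
            | exact hE1 k | exact hE2 k | exact hXk0 k | exact hr1
            | (intro hcon; nlinarith [hge k]))]
    ring
  -- the value of the full sum
  have hsum : (∑ j, y j) - (∑ j, w j) = 2*(r:ℝ) + 1/2 := by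
    simp only [hy, hw, Fintype.sum_sum_type, Fin.sum_univ_two, Sum.elim_inl, Sum.elim_inr,
      Matrix.cons_val_zero, Matrix.cons_val_one, Matrix.head_cons]
    have s1 : ∑ k, -X k = -∑ k, X k := by rw [Finset.sum_neg_distrib]
    have s2 : ∑ k : Fin r, (X k - 1) = (∑ k, X k) - r := by
      rw [Finset.sum_sub_distrib]; simp
    have s3 : ∑ k : Fin r, (-X k - 1) = -(∑ k, X k) - r := by
      rw [Finset.sum_sub_distrib, Finset.sum_neg_distrib]; simp
    rw [s1, s2, s3]; ring
  -- assemble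
  rw [hsum] at hkey
  simp only [Fintype.sum_sum_type, Fin.sum_univ_two] at hkey
  rw [hT0, hT1, Finset.sum_congr rfl (fun k _ => hTA k),
    Finset.sum_congr rfl (fun k _ => hTB k), ← Finset.mul_sum, ← Finset.mul_sum] at hkey
  have h3 : (2*(r:ℝ)+1) * ((∑ k, Acoef r 2 2 0 m k) + (∑ k, Bcoef r 2 2 0 m k))
      = 2*(r:ℝ) := by
    rw [mul_add]; linarith [hkey]
  rw [eq_div_iff hr1]
  linear_combination h3


lemma case2_sum (r : ℕ) (hr : 1 < r) (m : Fin r → ℤ) (hm : Dominant m)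
    (hc : m ⟨r - 1, by have := hm; omega⟩ = 0) :
    (∑ k, Acoef r 2 2 0 m k)
      + (∑ k ∈ univ.erase (⟨r - 1, by have := hm; omega⟩ : Fin r), Bcoef r 2 2 0 m k) = 1 := by
  classical
  have hr0 : 0 < r := by omega
  obtain ⟨L, hLval⟩ : ∃ L : Fin r, (L : ℕ) = r - 1 := ⟨⟨r - 1, by have := hm; omega⟩, rfl⟩
  have hLL : (⟨r - 1, by have := hm; omega⟩ : Fin r) = L := Fin.ext (by simp only [Fin.val_mk]; omega)
  rw [hLL]
  have hcL : m L = 0 := by rwa [hLL] at hc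
  obtain ⟨X, hXj⟩ : ∃ X : Fin r → ℝ, ∀ j, X j = (m j : ℝ) + rho r 2 2 0 j :=
    ⟨_, fun j => rfl⟩
  have hXval : ∀ k : Fin r, X k = (m k : ℝ) + ((r:ℝ) - (k:ℕ) - 1/2) := by
    intro k; rw [hXj, rho_so]
  have hmono : ∀ j k : Fin r, j < k → X k + 1 ≤ X j := by
    intro j k h
    have h1 : m k ≤ m j := hm.1 j k h.le
    have h1' : (m k : ℝ) ≤ (m j : ℝ) := by exact_mod_cast h1
    have h2' : ((j:ℕ):ℝ) + 1 ≤ ((k:ℕ):ℝ) := by exact_mod_cast (h : (j:ℕ) < (k:ℕ))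
    rw [hXval, hXval]; linarith
  have hXL : X L = 1/2 := by
    rw [hXval, hcL]
    have : ((L:ℕ):ℝ) = (r:ℝ) - 1 := by
      rw [hLval]; push_cast [Nat.cast_sub (by omega : 1 ≤ r)]; ring
    rw [this]; push_cast; ring
  have hle' : ∀ k : Fin r, k ≤ L := fun k => by
    simp only [Fin.le_def, hLval]; omega
  have hge' : ∀ k : Fin r, k ≠ L → (3:ℝ)/2 ≤ X k := by
    intro k hk
    have hlt : k < L := lt_of_le_of_ne (hle' k) hk
    have := hmono k L hlt; linarith
  have hpos : ∀ k : Fin r, (1:ℝ)/2 ≤ X k := by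
    intro k
    by_cases hk : k = L
    · rw [hk, hXL]
    · linarith [hge' k hk]
  have hXinj : ∀ j k : Fin r, X j = X k → j = k := by
    intro j k h
    rcases lt_trichotomy j k with hlt | heq | hlt
    · have := hmono j k hlt; exfalso; linarith
    · exact heq
    · have := hmono k j hlt; exfalso; linarith
  set y : Unit ⊕ (Fin r ⊕ Fin r) → ℝ :=
    Sum.elim (fun _ => 0) (Sum.elim X (fun k => -X k)) with hy
  set w : Unit ⊕ (Fin r ⊕ Fin r) → ℝ :=
    Sum.elim (fun _ => 0)
      (Sum.elim (fun k => if k = L then -1 else X k - 1) (fun k => -X k - 1)) with hw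
  have hyinj : Function.Injective y := by
    rintro (a | j | j) (b | l | l) h <;>
      simp only [hy, Sum.elim_inl, Sum.elim_inr] at h
    · rfl
    · exfalso; linarith [hpos l]
    · exfalso; linarith [hpos l]
    · exfalso; linarith [hpos j]
    · rw [hXinj j l h]
    · exfalso; linarith [hpos j, hpos l]
    · exfalso; linarith [hpos j]
    · exfalso; linarith [hpos j, hpos l]
    · have hjl : X j = X l := by linarith
      rw [hXinj j l hjl]
  have hkey := key_residue_sum y w hyinj
  have hXk0 : ∀ k : Fin r, X k ≠ 0 := fun k => ne_of_gt (by linarith [hpos k])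
  have hpairne : ∀ k j : Fin r, j ≠ k → X k - X j ≠ 0 := fun k j hj =>
    sub_ne_zero.mpr fun h => hj (hXinj j k h.symm)
  have hsumne : ∀ k j : Fin r, X k + X j ≠ 0 := fun k j =>
    ne_of_gt (by linarith [hpos k, hpos j])
  have hr1 : (2 * (r:ℝ) + 1) ≠ 0 := by positivity
  have hE1 : ∀ k : Fin r, (∏ j ∈ univ.erase k, (X k - X j)) ≠ 0 := fun k =>
    Finset.prod_ne_zero_iff.mpr fun j hj => hpairne k j (Finset.mem_erase.mp hj).1
  have hE2 : ∀ k : Fin r, (∏ j ∈ univ.erase k, (X k + X j)) ≠ 0 := fun k =>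
    Finset.prod_ne_zero_iff.mpr fun j _ => hsumne k j
  have prod_neg' : ∀ (t : Finset (Fin r)) (f : Fin r → ℝ),
      ∏ j ∈ t, (-f j) = (-1)^t.card * ∏ j ∈ t, f j := by
    intro t f
    rw [← Finset.prod_const, ← Finset.prod_mul_distrib]
    exact Finset.prod_congr rfl fun j _ => by ring
  -- numerator evaluation
  have hif : ∀ c : ℝ, ∏ j : Fin r, (c - (if j = L then (-1:ℝ) else X j - 1))
      = (c + 1) * ∏ j ∈ univ.erase L, (c - X j + 1) := by
    intro c
    rw [← Finset.mul_prod_erase univ _ (Finset.mem_univ L), if_pos rfl]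
    congr 1
    · ring
    · exact Finset.prod_congr rfl fun j hj => by
        rw [if_neg (Finset.mem_erase.mp hj).1]; ring
  have hnum : ∀ c : ℝ, (∏ j, (c - w j)) =
      (c * (c + 1)) * ((∏ j ∈ univ.erase L, (c - X j + 1)) * ∏ j, (c + X j + 1)) := by
    intro c
    rw [Fintype.prod_sum_type, Fintype.prod_sum_type]
    simp only [hw, Sum.elim_inl, Sum.elim_inr, Finset.univ_unique, Finset.prod_singleton]
    rw [hif]
    have e2 : ∏ j : Fin r, (c - (-X j - 1)) = ∏ j : Fin r, (c + X j + 1) :=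
      Finset.prod_congr rfl fun j _ => by ring
    rw [e2]; ring
  have hden : ∀ (i : Unit ⊕ (Fin r ⊕ Fin r)) (c : ℝ),
      (∏ j ∈ univ.erase i, (c - y j)) = ∏ j, (if j = i then 1 else (c - y j)) :=
    fun i c => (prod_ite_one_erase i _).symm
  -- slot: node 0 vanishes
  have hT1 : (∏ j, (y (Sum.inl ()) - w j)) /
      (∏ j ∈ univ.erase (Sum.inl () : Unit ⊕ (Fin r ⊕ Fin r)), (y (Sum.inl ()) - y j))
      = 0 := by
    have hz : (∏ j, (y (Sum.inl ()) - w j)) = 0 :=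
      Finset.prod_eq_zero (Finset.mem_univ (Sum.inl ())) (by norm_num [hy, hw])
    rw [hz, zero_div]

  -- slots for A (all k, including L)
  have hTA : ∀ k : Fin r, (∏ j, (y (Sum.inr (Sum.inl k)) - w j)) /
      (∏ j ∈ univ.erase (Sum.inr (Sum.inl k) : Unit ⊕ (Fin r ⊕ Fin r)),
        (y (Sum.inr (Sum.inl k)) - y j))
      = (2 * (r:ℝ) + 1) * Acoef r 2 2 0 m k := by
    intro k
    have hyk : y (Sum.inr (Sum.inl k)) = X k := rfl
    rw [hyk, hnum, hden]
    rw [Fintype.prod_sum_type, Fintype.prod_sum_type]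
    simp only [hy, Sum.elim_inl, Sum.elim_inr, Finset.univ_unique, Finset.prod_singleton,
      reduceCtorEq, ite_false, Sum.inl.injEq, Sum.inr.injEq]
    rw [prod_ite_one_erase k (fun j => X k - X j)]
    have e2 : ∏ j : Fin r, (X k - -X j) = ∏ j : Fin r, (X k + X j) :=
      Finset.prod_congr rfl fun j _ => by ring
    rw [e2, ← Finset.mul_prod_erase univ (fun j => X k + X j + 1) (Finset.mem_univ k),
        ← Finset.mul_prod_erase univ (fun j => X k + X j) (Finset.mem_univ k)]
    rw [Acoef_eq r m k X hXj hr0 (hXk0 k) (by linarith [hpos k])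
      (fun j hj => ⟨hpairne k j (Finset.mem_erase.mp hj).1, hsumne k j⟩)]
    rw [Finset.prod_mul_distrib, Finset.prod_mul_distrib]
    have hPk : ∏ j ∈ univ.erase k, (X k - X j + 1)
        = (X k + 1/2) * ∏ j ∈ univ.erase L, (X k - X j + 1) := by
      have h1 := Finset.mul_prod_erase univ (fun j => X k - X j + 1) (Finset.mem_univ L)
      have h2 := Finset.mul_prod_erase univ (fun j => X k - X j + 1) (Finset.mem_univ k)
      rw [hXL] at h1
      linear_combination h2 - h1
    rw [hPk, ← mul_div_assoc]
    rw [div_eq_div_iff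
      (by repeat' apply mul_ne_zero
          all_goals first
            | exact hE1 k | exact hE2 k | exact hXk0 k
            | (intro hcon; nlinarith [hpos k]))
      (by repeat' apply mul_ne_zero
          all_goals first
            | exact hE1 k | exact hE2 k | exact hXk0 k | exact hr1
            | (intro hcon; nlinarith [hpos k]))]
    ring
  -- B slots for k ≠ L
  have hTB : ∀ k : Fin r, k ≠ L → (∏ j, (y (Sum.inr (Sum.inr k)) - w j)) /
      (∏ j ∈ univ.erase (Sum.inr (Sum.inr k) : Unit ⊕ (Fin r ⊕ Fin r)),
        (y (Sum.inr (Sum.inr k)) - y j))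
      = (2 * (r:ℝ) + 1) * Bcoef r 2 2 0 m k := by
    intro k hkL
    have hge32 := hge' k hkL
    have hyk : y (Sum.inr (Sum.inr k)) = -X k := rfl
    rw [hyk, hnum, hden]
    rw [Fintype.prod_sum_type, Fintype.prod_sum_type]
    simp only [hy, Sum.elim_inl, Sum.elim_inr, Finset.univ_unique, Finset.prod_singleton,
      reduceCtorEq, ite_false, Sum.inl.injEq, Sum.inr.injEq]
    rw [prod_ite_one_erase k (fun j => -X k - -X j)]
    rw [← Finset.mul_prod_erase univ (fun j => -X k + X j + 1) (Finset.mem_univ k),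
        ← Finset.mul_prod_erase univ (fun j => -X k - X j) (Finset.mem_univ k)]
    have h12 : (1:ℝ)/2 - X k ≠ 0 := by intro hcon; linarith
    have hPL : ∏ j ∈ univ.erase L, (-X k - X j + 1)
        = 2 * ∏ j ∈ univ.erase k, (-X k - X j + 1) := by
      have h1 := Finset.mul_prod_erase univ (fun j => -X k - X j + 1) (Finset.mem_univ L)
      have h2 := Finset.mul_prod_erase univ (fun j => -X k - X j + 1) (Finset.mem_univ k)
      rw [hXL] at h1
      apply mul_left_cancel₀ h12
      linear_combination h1 - h2
    rw [hPL]
    have c1 : ∏ j ∈ univ.erase k, (-X k - X j + 1)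
        = (-1)^(univ.erase k).card * ∏ j ∈ univ.erase k, (X k + X j - 1) := by
      rw [← prod_neg']
      exact Finset.prod_congr rfl fun j _ => by ring
    have c2 : ∏ j ∈ univ.erase k, (-X k + X j + 1)
        = (-1)^(univ.erase k).card * ∏ j ∈ univ.erase k, (X k - X j - 1) := by
      rw [← prod_neg']
      exact Finset.prod_congr rfl fun j _ => by ring
    have c3 : ∏ j ∈ univ.erase k, (-X k - X j)
        = (-1)^(univ.erase k).card * ∏ j ∈ univ.erase k, (X k + X j) := by
      rw [← prod_neg']
      exact Finset.prod_congr rfl fun j _ => by ring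
    have c4 : ∏ j ∈ univ.erase k, (-X k - -X j)
        = (-1)^(univ.erase k).card * ∏ j ∈ univ.erase k, (X k - X j) := by
      rw [← prod_neg']
      exact Finset.prod_congr rfl fun j _ => by ring
    rw [c1, c2, c3, c4]
    rw [Bcoef_eq r m k X hXj hr0 (hXk0 k) (by intro hcon; linarith)
      (fun j hj => ⟨hpairne k j (Finset.mem_erase.mp hj).1, hsumne k j⟩)]
    rw [Finset.prod_mul_distrib, Finset.prod_mul_distrib, ← mul_div_assoc]
    have hu : ((-1:ℝ))^(univ.erase k).card ≠ 0 := pow_ne_zero _ (by norm_num)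
    rw [div_eq_div_iff
      (by repeat' apply mul_ne_zero
          all_goals first
            | exact hE1 k | exact hE2 k | exact hXk0 k | exact hu
            | (intro hcon; nlinarith [hpos k]))
      (by repeat' apply mul_ne_zero
          all_goals first
            | exact hE1 k | exact hE2 k | exact hXk0 k | exact hr1
            | (intro hcon; nlinarith [hpos k]))]
    ring
  -- B slot at L
  have hTBL : (∏ j, (y (Sum.inr (Sum.inr L)) - w j)) /
      (∏ j ∈ univ.erase (Sum.inr (Sum.inr L) : Unit ⊕ (Fin r ⊕ Fin r)),
        (y (Sum.inr (Sum.inr L)) - y j))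
      = -(1/2) := by
    have hyk : y (Sum.inr (Sum.inr L)) = -X L := rfl
    rw [hyk, hnum, hden]
    rw [Fintype.prod_sum_type, Fintype.prod_sum_type]
    simp only [hy, Sum.elim_inl, Sum.elim_inr, Finset.univ_unique, Finset.prod_singleton,
      reduceCtorEq, ite_false, Sum.inl.injEq, Sum.inr.injEq]
    rw [prod_ite_one_erase L (fun j => -X L - -X j)]
    rw [← Finset.mul_prod_erase univ (fun j => -X L + X j + 1) (Finset.mem_univ L),
        ← Finset.mul_prod_erase univ (fun j => -X L - X j) (Finset.mem_univ L)]
    rw [hXL]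
    have hgeL' : ∀ j : Fin r, j ∈ univ.erase L → (3:ℝ)/2 ≤ X j := fun j hj =>
      hge' j (Finset.mem_erase.mp hj).1
    have c1 : ∏ j ∈ univ.erase L, (-(1/2 : ℝ) - X j + 1)
        = (-1)^(univ.erase L).card * ∏ j ∈ univ.erase L, (X j - 1/2) := by
      rw [← prod_neg']
      exact Finset.prod_congr rfl fun j _ => by ring
    have c2 : ∏ j ∈ univ.erase L, (-(1/2 : ℝ) + X j + 1)
        = ∏ j ∈ univ.erase L, (X j + 1/2) :=
      Finset.prod_congr rfl fun j _ => by ring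
    have c3 : ∏ j ∈ univ.erase L, (-(1/2 : ℝ) - X j)
        = (-1)^(univ.erase L).card * ∏ j ∈ univ.erase L, (X j + 1/2) := by
      rw [← prod_neg']
      exact Finset.prod_congr rfl fun j _ => by ring
    have c4 : ∏ j ∈ univ.erase L, (-(1/2 : ℝ) - -X j)
        = ∏ j ∈ univ.erase L, (X j - 1/2) :=
      Finset.prod_congr rfl fun j _ => by ring
    rw [c1, c2, c3, c4]
    have hu : ((-1:ℝ))^(univ.erase L).card ≠ 0 := pow_ne_zero _ (by norm_num)
    have hP1 : (∏ j ∈ univ.erase L, (X j - 1/2)) ≠ 0 :=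
      Finset.prod_ne_zero_iff.mpr fun j hj => by
        have := hgeL' j hj; intro hcon; linarith
    have hP2 : (∏ j ∈ univ.erase L, (X j + 1/2)) ≠ 0 :=
      Finset.prod_ne_zero_iff.mpr fun j hj => by
        have := hgeL' j hj; intro hcon; linarith
    rw [div_eq_iff
      (by repeat' apply mul_ne_zero
          all_goals first
            | exact hP1 | exact hP2 | exact hu
            | norm_num)]
    ring
  -- the value of the full sum
  have hsum : (∑ j, y j) - (∑ j, w j) = 2*(r:ℝ) + 1/2 := by
    simp only [hy, hw, Fintype.sum_sum_type, Finset.univ_unique, Finset.sum_singleton,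
      Sum.elim_inl, Sum.elim_inr]
    have hcard : ((univ.erase L).card : ℝ) = (r:ℝ) - 1 := by
      rw [Finset.card_erase_of_mem (Finset.mem_univ L), Finset.card_univ, Fintype.card_fin]
      push_cast [Nat.cast_sub (by omega : 1 ≤ r)]; ring
    have s0 : ∑ j : Fin r, (if j = L then (-1:ℝ) else X j - 1)
        = -1 + ((∑ j, X j) - X L - ((r:ℝ) - 1)) := by
      rw [← Finset.add_sum_erase _ _ (Finset.mem_univ L), if_pos rfl]
      have : ∑ j ∈ univ.erase L, (if j = L then (-1:ℝ) else X j - 1)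
          = ∑ j ∈ univ.erase L, (X j - 1) :=
        Finset.sum_congr rfl fun j hj => by rw [if_neg (Finset.mem_erase.mp hj).1]
      rw [this, Finset.sum_sub_distrib, Finset.sum_const, nsmul_eq_mul, mul_one, hcard]
      have : ∑ j ∈ univ.erase L, X j = (∑ j, X j) - X L := by
        rw [← Finset.add_sum_erase _ _ (Finset.mem_univ L)]; ring
      rw [this]
    have s1 : ∑ k, -X k = -∑ k, X k := by rw [Finset.sum_neg_distrib]
    have s3 : ∑ k : Fin r, (-X k - 1) = -(∑ k, X k) - r := by
      rw [Finset.sum_sub_distrib, Finset.sum_neg_distrib]; simp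
    rw [s0, s1, s3, hXL]; ring
  -- assemble
  rw [hsum] at hkey
  simp only [Fintype.sum_sum_type, Finset.univ_unique, Finset.sum_singleton] at hkey
  have hBsplit : ∑ k : Fin r, (∏ j, (y (Sum.inr (Sum.inr k)) - w j)) /
      (∏ j ∈ univ.erase (Sum.inr (Sum.inr k) : Unit ⊕ (Fin r ⊕ Fin r)),
        (y (Sum.inr (Sum.inr k)) - y j))
      = ((∏ j, (y (Sum.inr (Sum.inr L)) - w j)) /
        (∏ j ∈ univ.erase (Sum.inr (Sum.inr L) : Unit ⊕ (Fin r ⊕ Fin r)),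
          (y (Sum.inr (Sum.inr L)) - y j)))
        + ∑ k ∈ univ.erase L, (∏ j, (y (Sum.inr (Sum.inr k)) - w j)) /
          (∏ j ∈ univ.erase (Sum.inr (Sum.inr k) : Unit ⊕ (Fin r ⊕ Fin r)),
            (y (Sum.inr (Sum.inr k)) - y j)) :=
    (Finset.add_sum_erase _ _ (Finset.mem_univ L)).symm
  rw [hT1, hBsplit, hTBL,
    Finset.sum_congr rfl (fun k _ => hTA k),
    Finset.sum_congr rfl (fun k hk => hTB k (Finset.mem_erase.mp hk).1),
    ← Finset.mul_sum, ← Finset.mul_sum] at hkey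
  have h3 : (2*(r:ℝ)+1) * ((∑ k, Acoef r 2 2 0 m k)
      + (∑ k ∈ univ.erase L, Bcoef r 2 2 0 m k)) = (2*(r:ℝ)+1) * 1 := by
    rw [mul_add, mul_one]; linarith [hkey]
  exact mul_left_cancel₀ hr1 h3



theorem Cm_so_split (r : ℕ) (hr : 1 < r) (m : Fin r → ℤ) (hm : Dominant m) :
    (1 ≤ m ⟨r - 1, by omega⟩ → Ccoef r 2 2 0 m = 1 / (2 * (r : ℝ) + 1)) ∧
      (m ⟨r - 1, by omega⟩ = 0 → Ccoef r 2 2 0 m = 0) ∧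
      (Ccoef r 2 2 0 m = 0 ↔ m ⟨r - 1, by omega⟩ = 0) := by
  classical
  have hr1 : (2 * (r:ℝ) + 1) ≠ 0 := by positivity
  have hAfull : ∑ k ∈ univ.filter (fun k : Fin r =>
        Dominant (fun j => m j + if j = k then 1 else 0)), Acoef r 2 2 0 m k
      = ∑ k, Acoef r 2 2 0 m k :=
    Finset.sum_subset (Finset.filter_subset _ _) fun k hku hk =>
      Acoef_eq_zero r m k hm fun hd => hk (Finset.mem_filter.mpr ⟨hku, hd⟩)
  have hP1 : 1 ≤ m ⟨r - 1, by omega⟩ → Ccoef r 2 2 0 m = 1 / (2 * (r : ℝ) + 1) := by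
    intro h1
    have hBfull : ∑ k ∈ univ.filter (fun k : Fin r =>
          Dominant (fun j => m j - if j = k then 1 else 0)), Bcoef r 2 2 0 m k
        = ∑ k, Bcoef r 2 2 0 m k := by
      refine Finset.sum_subset (Finset.filter_subset _ _) fun k hku hk => ?_
      refine Bcoef_eq_zero r m k hm (fun hd => hk (Finset.mem_filter.mpr ⟨hku, hd⟩)) ?_
      right
      have hkL : k ≤ (⟨r - 1, by omega⟩ : Fin r) := by
        simp only [Fin.le_def]; omega
      exact le_trans h1 (hm.1 k _ hkL)
    unfold Ccoef
    rw [hAfull, hBfull, sub_sub, case1_sum r hr m hm h1]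
    field_simp
    ring
  have hP2 : m ⟨r - 1, by omega⟩ = 0 → Ccoef r 2 2 0 m = 0 := by
    intro h2
    have hBerase : ∑ k ∈ univ.filter (fun k : Fin r =>
          Dominant (fun j => m j - if j = k then 1 else 0)), Bcoef r 2 2 0 m k
        = ∑ k ∈ univ.erase (⟨r - 1, by omega⟩ : Fin r), Bcoef r 2 2 0 m k := by
      refine Finset.sum_subset ?_ ?_
      · intro k hk
        rw [Finset.mem_filter] at hk
        refine Finset.mem_erase.mpr ⟨?_, Finset.mem_univ k⟩
        intro hkL
        have h3 : (0:ℤ) ≤ m (⟨r - 1, by omega⟩ : Fin r) - 1 := by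
          have h4 := hk.2.2 (⟨r - 1, by omega⟩ : Fin r)
          simpa [hkL] using h4
        omega
      · intro k hke hk
        refine Bcoef_eq_zero r m k hm
          (fun hd => hk (Finset.mem_filter.mpr ⟨Finset.mem_univ k, hd⟩)) ?_
        left
        have hkL := (Finset.mem_erase.mp hke).1
        have : (k:ℕ) ≠ r - 1 := fun h => hkL (Fin.ext (by simp [h]))
        have := k.isLt
        omega
    unfold Ccoef
    rw [hAfull, hBerase, sub_sub, case2_sum r hr m hm h2]
    ring
  refine ⟨hP1, hP2, ⟨?_, hP2⟩⟩
  intro hC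
  by_contra hne
  have h1 : 1 ≤ m ⟨r - 1, by omega⟩ := by
    have := hm.2 ⟨r - 1, by omega⟩; omega
  rw [hP1 h1] at hC
  have : (0:ℝ) < 1 / (2 * (r:ℝ) + 1) := by positivity
  linarith
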